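/- Let L be a lattice, let M be a cancellative commutative monoid, and let μ : Dim L → M be a monoid homomorphism that separates zero, i.e. μ(d) = 0 implies d = 0 for all d ∈ Dim L. Then L is modular. (Consequently, in the pentagon configuration o ≤ c ≤ a ≤ i, a ∧ b = o, b ∨ c = i, one must have a = c.) -/

import Mathlib

section Dim

variable (L : Type*) [Lattice L]

/-- Generators of the dimension monoid: pairs `x ≤ y` in `L`. -/
abbrev DimGen := {p : L × L // p.1 ≤ p.2}

/-- The free commutative monoid on the generators. -/
abbrev DimFree := DimGen L →₀ ℕ

/-- The defining relations (D0), (D1), (D2) of the dimension monoid. -/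
inductive DimRel : DimFree L → DimFree L → Prop
  | d0 (x : L) : DimRel (Finsupp.single ⟨(x, x), le_rfl⟩ 1) 0
  | d1 (x y z : L) (hxy : x ≤ y) (hyz : y ≤ z) :
      DimRel (Finsupp.single ⟨(x, z), hxy.trans hyz⟩ 1)
        (Finsupp.single ⟨(x, y), hxy⟩ 1 + Finsupp.single ⟨(y, z), hyz⟩ 1)
  | d2 (x y : L) : DimRel (Finsupp.single ⟨(x ⊓ y, x), inf_le_left⟩ 1)
        (Finsupp.single ⟨(y, x ⊔ y), le_sup_right⟩ 1)

/-- The smallest monoid congruence containing the defining relations. -/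
noncomputable def DimCon : AddCon (DimFree L) := addConGen (DimRel L)

/-- The dimension monoid of a lattice `L`. -/
abbrev DimMonoid := (DimCon L).Quotient

variable {L}

/-- The extended generator `Δ(x,y) := Δ(x ⊓ y, x ⊔ y)` of the dimension monoid. -/
noncomputable def dimDelta (x y : L) : DimMonoid L :=
  (DimCon L).mk' (Finsupp.single ⟨(x ⊓ y, x ⊔ y), inf_le_sup⟩ 1)

end Dim

section Aux

variable {L : Type*} [Lattice L]

/-- The invariant: all generators occurring in `s` are diagonal. -/
def DimDiag (s : DimFree L) : Prop := ∀ p : DimGen L, s p ≠ 0 → p.1.1 = p.1.2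

lemma dimDiag_zero : DimDiag (0 : DimFree L) := fun _ hp => absurd rfl hp

lemma dimDiag_add {a b : DimFree L} : DimDiag (a + b) ↔ DimDiag a ∧ DimDiag b := by
  constructor
  · intro h
    constructor <;> intro p hp <;> apply h p <;> simp [Finsupp.add_apply] <;> omega
  · rintro ⟨ha, hb⟩ p hp
    simp only [Finsupp.add_apply] at hp
    rcases Nat.eq_zero_or_pos (a p) with h | h
    · exact hb p (by omega)
    · exact ha p (by omega)

lemma dimDiag_single {q : DimGen L} : DimDiag (Finsupp.single q 1) ↔ q.1.1 = q.1.2 := by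
  constructor
  · intro h; exact h q (by simp)
  · intro h p hp
    have hpq : p = q := by
      by_contra hne
      exact hp (Finsupp.single_eq_of_ne' (Ne.symm hne))
    rw [hpq]; exact h

lemma dimDiag_of_rel {a b : DimFree L} (h : AddConGen.Rel (DimRel L) a b) :
    DimDiag a ↔ DimDiag b := by
  induction h with
  | of a b hab =>
    cases hab with
    | d0 x => simp [dimDiag_single, dimDiag_zero]
    | d1 x y z hxy hyz =>
      rw [dimDiag_add, dimDiag_single, dimDiag_single, dimDiag_single]
      show x = z ↔ x = y ∧ y = z
      constructor
      · rintro h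
        subst h
        exact ⟨le_antisymm hxy hyz, le_antisymm hyz hxy⟩
      · rintro ⟨h1, h2⟩; exact h1.trans h2
    | d2 x y =>
      rw [dimDiag_single, dimDiag_single]
      show x ⊓ y = x ↔ y = x ⊔ y
      rw [inf_eq_left, eq_comm, sup_eq_right]
  | refl => exact Iff.rfl
  | symm _ ih => exact ih.symm
  | trans _ _ ih1 ih2 => exact ih1.trans ih2
  | add _ _ ih1 ih2 => rw [dimDiag_add, dimDiag_add, ih1, ih2]

/-- `Δ(u,v) = 0` in the dimension monoid forces `u = v`. -/
lemma eq_of_delta_eq_zero {u v : L} (huv : u ≤ v)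
    (h : (DimCon L).mk' (Finsupp.single ⟨(u, v), huv⟩ 1) = 0) : u = v := by
  have h0 : (0 : DimMonoid L) = (DimCon L).mk' 0 := by simp
  rw [h0] at h
  have hc : (DimCon L) (Finsupp.single ⟨(u, v), huv⟩ 1) 0 :=
    (AddCon.eq _).mp h
  have hrel : AddConGen.Rel (DimRel L) (Finsupp.single ⟨(u, v), huv⟩ 1) 0 := hc
  have := (dimDiag_of_rel hrel).mpr dimDiag_zero
  exact dimDiag_single.mp this

/-- Generator relations lifted to the quotient. -/
lemma mk'_eq_of_rel {a b : DimFree L} (h : DimRel L a b) :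
    (DimCon L).mk' a = (DimCon L).mk' b :=
  (AddCon.eq _).mpr (AddConGen.Rel.of a b h)

end Aux

/-- If the dimension monoid of a lattice `L` admits a zero-separating monoid
homomorphism into a cancellative commutative monoid, then `L` is modular. -/
theorem modular_of_zero_separating_hom {L : Type*} [Lattice L]
    {M : Type*} [AddCancelCommMonoid M] (μ : DimMonoid L →+ M)
    (hzs : ∀ d : DimMonoid L, μ d = 0 → d = 0) :
    IsModularLattice L := by
  constructor
  intro x y z hxz
  set c := x ⊔ y ⊓ z with hc
  set a := (x ⊔ y) ⊓ z with ha
  -- pentagon facts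
  have hoc : y ⊓ z ≤ c := le_sup_right
  have hca : c ≤ a :=
    sup_le (le_inf le_sup_left hxz) (le_inf (inf_le_left.trans le_sup_right) inf_le_right)
  have hoa : y ⊓ z ≤ a := hoc.trans hca
  have h1 : a ⊓ y = y ⊓ z :=
    le_antisymm (le_inf inf_le_right (inf_le_left.trans inf_le_right))
      (le_inf hoa inf_le_left)
  have h2 : c ⊓ y = y ⊓ z :=
    le_antisymm ((inf_le_inf_right y hca).trans_eq h1) (le_inf hoc inf_le_left)
  have hxa : x ≤ a := le_inf le_sup_left hxz
  have h3 : a ⊔ y = x ⊔ y :=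
    le_antisymm (sup_le inf_le_left le_sup_right)
      (sup_le (le_sup_of_le_left hxa) le_sup_right)
  have h4 : c ⊔ y = x ⊔ y :=
    le_antisymm (sup_le (sup_le le_sup_left (inf_le_left.trans le_sup_right)) le_sup_right)
      (sup_le (le_sup_of_le_left le_sup_left) le_sup_right)
  -- D2 applied to (a, y) and (c, y)
  have E1 : (DimCon L).mk' (Finsupp.single ⟨(y ⊓ z, a), hoa⟩ 1)
      = (DimCon L).mk' (Finsupp.single ⟨(y, x ⊔ y), le_sup_right⟩ 1) := by
    have := mk'_eq_of_rel (DimRel.d2 a y)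
    have e1 : (⟨(a ⊓ y, a), inf_le_left⟩ : DimGen L) = ⟨(y ⊓ z, a), hoa⟩ :=
      Subtype.ext (show (a ⊓ y, a) = (y ⊓ z, a) by rw [h1])
    have e2 : (⟨(y, a ⊔ y), le_sup_right⟩ : DimGen L) = ⟨(y, x ⊔ y), le_sup_right⟩ :=
      Subtype.ext (show (y, a ⊔ y) = (y, x ⊔ y) by rw [h3])
    rwa [e1, e2] at this
  have E2 : (DimCon L).mk' (Finsupp.single ⟨(y ⊓ z, c), hoc⟩ 1)
      = (DimCon L).mk' (Finsupp.single ⟨(y, x ⊔ y), le_sup_right⟩ 1) := by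
    have := mk'_eq_of_rel (DimRel.d2 c y)
    have e1 : (⟨(c ⊓ y, c), inf_le_left⟩ : DimGen L) = ⟨(y ⊓ z, c), hoc⟩ :=
      Subtype.ext (show (c ⊓ y, c) = (y ⊓ z, c) by rw [h2])
    have e2 : (⟨(y, c ⊔ y), le_sup_right⟩ : DimGen L) = ⟨(y, x ⊔ y), le_sup_right⟩ :=
      Subtype.ext (show (y, c ⊔ y) = (y, x ⊔ y) by rw [h4])
    rwa [e1, e2] at this
  -- D1
  have E3 : (DimCon L).mk' (Finsupp.single ⟨(y ⊓ z, a), hoa⟩ 1)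
      = (DimCon L).mk' (Finsupp.single ⟨(y ⊓ z, c), hoc⟩ 1)
        + (DimCon L).mk' (Finsupp.single ⟨(c, a), hca⟩ 1) := by
    have := mk'_eq_of_rel (DimRel.d1 (y ⊓ z) c a hoc hca)
    rwa [map_add] at this
  have E4 : (DimCon L).mk' (Finsupp.single ⟨(y ⊓ z, c), hoc⟩ 1)
      = (DimCon L).mk' (Finsupp.single ⟨(y ⊓ z, c), hoc⟩ 1)
        + (DimCon L).mk' (Finsupp.single ⟨(c, a), hca⟩ 1) := by
    rw [← E3, E1, E2]
  have hmu : μ ((DimCon L).mk' (Finsupp.single ⟨(c, a), hca⟩ 1)) = 0 := by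
    have := congrArg μ E4
    rw [map_add] at this
    exact (left_eq_add.mp this)
  have hzero : (DimCon L).mk' (Finsupp.single ⟨(c, a), hca⟩ 1) = 0 := hzs _ hmu
  have : c = a := eq_of_delta_eq_zero hca hzero
  exact this ▸ le_rfl
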